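/- Under the hypotheses of the F-family: (1) if c ≤ 0.6 and c − b ≤ 0.25, then ξ₄ − ξ₃ > z₄ − z₃; (2) if c ≤ 0.5 and c − b ≤ 0.379, then likewise ξ₄ − ξ₃ > z₄ − z₃. -/

import Mathlib

def Qp (a b c x : ℝ) : ℝ :=
  5*x^4 - 4*(1+a+b+c)*x^3 + 3*(a+b+c+a*b+a*c+b*c)*x^2 - 2*(a*b+a*c+b*c+a*b*c)*x + a*b*c

lemma cert11u (a b c : ℝ) (ha : 0 ≤ a) (hab : a ≤ b) (hbc : b ≤ c) (hc : c ≤ 1/2) (hgap : c - b ≤ 1/4) :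
    Qp a b c ((11/20)*b + (7/20)*c + 3/20) < 0 := by
  have g0 : (0:ℝ) ≤ a := by linarith
  have g1 : (0:ℝ) ≤ -a + b := by linarith
  have g2 : (0:ℝ) ≤ -b + c := by linarith
  have g3 : (0:ℝ) ≤ -c + 1/2 := by linarith
  have g4 : (0:ℝ) ≤ b - c + 1/4 := by linarith
  unfold Qp
  linarith [(mul_nonneg g0 g1),
    (mul_nonneg g0 g3),
    (mul_nonneg g1 g3),
    (mul_nonneg g1 g4),
    (mul_nonneg g2 g4),
    (mul_nonneg g3 g4),
    (mul_nonneg (mul_nonneg g0 g0) g1),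
    (mul_nonneg (mul_nonneg g0 g1) g2),
    (mul_nonneg (mul_nonneg g0 g1) g3),
    (mul_nonneg (mul_nonneg g0 g2) g3),
    (mul_nonneg (mul_nonneg g0 g3) g3),
    (mul_nonneg (mul_nonneg g1 g1) g2),
    (mul_nonneg (mul_nonneg g1 g1) g3),
    (mul_nonneg (mul_nonneg g1 g2) g3),
    (mul_nonneg (mul_nonneg g1 g2) g4),
    (mul_nonneg (mul_nonneg g2 g2) g4),
    (mul_nonneg (mul_nonneg g2 g3) g3),
    (mul_nonneg (mul_nonneg g2 g3) g4),
    (mul_nonneg (mul_nonneg (mul_nonneg g0 g0) g0) g1),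
    (mul_nonneg (mul_nonneg (mul_nonneg g0 g0) g0) g3),
    (mul_nonneg (mul_nonneg (mul_nonneg g0 g0) g1) g1),
    (mul_nonneg (mul_nonneg (mul_nonneg g0 g0) g1) g2),
    (mul_nonneg (mul_nonneg (mul_nonneg g0 g0) g2) g3),
    (mul_nonneg (mul_nonneg (mul_nonneg g0 g0) g2) g4),
    (mul_nonneg (mul_nonneg (mul_nonneg g0 g1) g1) g1),
    (mul_nonneg (mul_nonneg (mul_nonneg g0 g1) g1) g2),
    (mul_nonneg (mul_nonneg (mul_nonneg g0 g1) g2) g2),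
    (mul_nonneg (mul_nonneg (mul_nonneg g0 g2) g3) g3),
    (mul_nonneg (mul_nonneg (mul_nonneg g1 g1) g1) g1),
    (mul_nonneg (mul_nonneg (mul_nonneg g1 g1) g1) g2),
    (mul_nonneg (mul_nonneg (mul_nonneg g1 g1) g2) g2),
    (mul_nonneg (mul_nonneg (mul_nonneg g1 g2) g2) g2),
    (mul_nonneg (mul_nonneg (mul_nonneg g2 g2) g2) g2),
    (mul_nonneg (mul_nonneg (mul_nonneg g2 g2) g3) g3)]

lemma cert11v (a b c : ℝ) (ha : 0 ≤ a) (hab : a ≤ b) (hbc : b ≤ c) (hc : c ≤ 1/2) (hgap : c - b ≤ 1/4) :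
    Qp a b c ((1/20)*b + (7/20)*c + 13/20) < 0 := by
  have g0 : (0:ℝ) ≤ a := by linarith
  have g1 : (0:ℝ) ≤ -a + b := by linarith
  have g2 : (0:ℝ) ≤ -b + c := by linarith
  have g3 : (0:ℝ) ≤ -c + 1/2 := by linarith
  have g4 : (0:ℝ) ≤ b - c + 1/4 := by linarith
  unfold Qp
  linarith [g3,
    (mul_nonneg g1 g3),
    (mul_nonneg g2 g3),
    (mul_nonneg g2 g4),
    (mul_nonneg g3 g3),
    (mul_nonneg (mul_nonneg g0 g0) g1),
    (mul_nonneg (mul_nonneg g0 g0) g2),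
    (mul_nonneg (mul_nonneg g0 g0) g3),
    (mul_nonneg (mul_nonneg g0 g1) g2),
    (mul_nonneg (mul_nonneg g0 g1) g3),
    (mul_nonneg (mul_nonneg g0 g2) g2),
    (mul_nonneg (mul_nonneg g0 g3) g3),
    (mul_nonneg (mul_nonneg g1 g1) g3),
    (mul_nonneg (mul_nonneg g1 g2) g2),
    (mul_nonneg (mul_nonneg g1 g3) g3),
    (mul_nonneg (mul_nonneg g2 g2) g2),
    (mul_nonneg (mul_nonneg g2 g3) g3),
    (mul_nonneg (mul_nonneg (mul_nonneg g0 g0) g0) g2),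
    (mul_nonneg (mul_nonneg (mul_nonneg g0 g0) g1) g1),
    (mul_nonneg (mul_nonneg (mul_nonneg g0 g0) g1) g2),
    (mul_nonneg (mul_nonneg (mul_nonneg g0 g0) g1) g3),
    (mul_nonneg (mul_nonneg (mul_nonneg g0 g0) g2) g3),
    (mul_nonneg (mul_nonneg (mul_nonneg g0 g1) g1) g1),
    (mul_nonneg (mul_nonneg (mul_nonneg g0 g1) g1) g3),
    (mul_nonneg (mul_nonneg (mul_nonneg g0 g1) g1) g4),
    (mul_nonneg (mul_nonneg (mul_nonneg g0 g1) g2) g3),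
    (mul_nonneg (mul_nonneg (mul_nonneg g0 g2) g2) g2),
    (mul_nonneg (mul_nonneg (mul_nonneg g1 g1) g1) g3),
    (mul_nonneg (mul_nonneg (mul_nonneg g1 g1) g1) g4),
    (mul_nonneg (mul_nonneg (mul_nonneg g1 g1) g2) g2),
    (mul_nonneg (mul_nonneg (mul_nonneg g1 g1) g2) g3),
    (mul_nonneg (mul_nonneg (mul_nonneg g1 g2) g2) g2),
    (mul_nonneg (mul_nonneg (mul_nonneg g2 g2) g2) g2)]

lemma cert12u (a b c : ℝ) (ha : 0 ≤ a) (hab : a ≤ b) (hbc : b ≤ c) (hc : 1/2 ≤ c) (hc' : c ≤ 3/5) (hgap : c - b ≤ 1/4) :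
    Qp a b c ((27/50)*b + (21/50)*c + 1/10) < 0 := by
  have g0 : (0:ℝ) ≤ a := by linarith
  have g1 : (0:ℝ) ≤ -a + b := by linarith
  have g2 : (0:ℝ) ≤ -b + c := by linarith
  have g3 : (0:ℝ) ≤ -c + 3/5 := by linarith
  have g4 : (0:ℝ) ≤ c - 1/2 := by linarith
  have g5 : (0:ℝ) ≤ b - c + 1/4 := by linarith
  unfold Qp
  linarith [g1,
    (mul_nonneg g2 g5),
    (mul_nonneg g3 g4),
    (mul_nonneg g3 g5),
    (mul_nonneg (mul_nonneg g0 g1) g2),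
    (mul_nonneg (mul_nonneg g0 g1) g3),
    (mul_nonneg (mul_nonneg g0 g3) g3),
    (mul_nonneg (mul_nonneg g1 g1) g2),
    (mul_nonneg (mul_nonneg g1 g1) g3),
    (mul_nonneg (mul_nonneg g1 g2) g5),
    (mul_nonneg (mul_nonneg g1 g3) g3),
    (mul_nonneg (mul_nonneg g2 g2) g5),
    (mul_nonneg (mul_nonneg g2 g3) g4),
    (mul_nonneg (mul_nonneg g2 g3) g5),
    (mul_nonneg (mul_nonneg (mul_nonneg g0 g0) g0) g1),
    (mul_nonneg (mul_nonneg (mul_nonneg g0 g0) g1) g1),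
    (mul_nonneg (mul_nonneg (mul_nonneg g0 g0) g1) g3),
    (mul_nonneg (mul_nonneg (mul_nonneg g0 g0) g1) g5),
    (mul_nonneg (mul_nonneg (mul_nonneg g0 g0) g2) g3),
    (mul_nonneg (mul_nonneg (mul_nonneg g0 g0) g2) g5),
    (mul_nonneg (mul_nonneg (mul_nonneg g0 g0) g3) g4),
    (mul_nonneg (mul_nonneg (mul_nonneg g0 g0) g4) g5),
    (mul_nonneg (mul_nonneg (mul_nonneg g0 g1) g1) g1),
    (mul_nonneg (mul_nonneg (mul_nonneg g0 g1) g1) g3),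
    (mul_nonneg (mul_nonneg (mul_nonneg g0 g1) g1) g5),
    (mul_nonneg (mul_nonneg (mul_nonneg g0 g1) g2) g3),
    (mul_nonneg (mul_nonneg (mul_nonneg g0 g2) g3) g3),
    (mul_nonneg (mul_nonneg (mul_nonneg g0 g2) g3) g5),
    (mul_nonneg (mul_nonneg (mul_nonneg g1 g1) g1) g1),
    (mul_nonneg (mul_nonneg (mul_nonneg g1 g1) g1) g3),
    (mul_nonneg (mul_nonneg (mul_nonneg g1 g1) g1) g5),
    (mul_nonneg (mul_nonneg (mul_nonneg g1 g1) g2) g3),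
    (mul_nonneg (mul_nonneg (mul_nonneg g1 g2) g3) g3),
    (mul_nonneg (mul_nonneg (mul_nonneg g2 g2) g3) g3)]

lemma cert12v (a b c : ℝ) (ha : 0 ≤ a) (hab : a ≤ b) (hbc : b ≤ c) (hc : 1/2 ≤ c) (hc' : c ≤ 3/5) (hgap : c - b ≤ 1/4) :
    Qp a b c ((1/25)*b + (21/50)*c + 3/5) < 0 := by
  have g0 : (0:ℝ) ≤ a := by linarith
  have g1 : (0:ℝ) ≤ -a + b := by linarith
  have g2 : (0:ℝ) ≤ -b + c := by linarith
  have g3 : (0:ℝ) ≤ -c + 3/5 := by linarith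
  have g4 : (0:ℝ) ≤ c - 1/2 := by linarith
  have g5 : (0:ℝ) ≤ b - c + 1/4 := by linarith
  unfold Qp
  linarith [g0,
    g3,
    (mul_nonneg g1 g3),
    (mul_nonneg g2 g3),
    (mul_nonneg g3 g3),
    (mul_nonneg g5 g5),
    (mul_nonneg (mul_nonneg g0 g0) g2),
    (mul_nonneg (mul_nonneg g0 g0) g3),
    (mul_nonneg (mul_nonneg g0 g1) g2),
    (mul_nonneg (mul_nonneg g0 g1) g3),
    (mul_nonneg (mul_nonneg g0 g2) g2),
    (mul_nonneg (mul_nonneg g0 g2) g4),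
    (mul_nonneg (mul_nonneg g1 g3) g3),
    (mul_nonneg (mul_nonneg g1 g5) g5),
    (mul_nonneg (mul_nonneg g2 g3) g3),
    (mul_nonneg (mul_nonneg g5 g5) g5),
    (mul_nonneg (mul_nonneg (mul_nonneg g0 g0) g0) g2),
    (mul_nonneg (mul_nonneg (mul_nonneg g0 g0) g0) g3),
    (mul_nonneg (mul_nonneg (mul_nonneg g0 g0) g1) g2),
    (mul_nonneg (mul_nonneg (mul_nonneg g0 g0) g1) g3),
    (mul_nonneg (mul_nonneg (mul_nonneg g0 g0) g2) g3),
    (mul_nonneg (mul_nonneg (mul_nonneg g0 g1) g1) g2),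
    (mul_nonneg (mul_nonneg (mul_nonneg g0 g1) g1) g3),
    (mul_nonneg (mul_nonneg (mul_nonneg g0 g1) g2) g3),
    (mul_nonneg (mul_nonneg (mul_nonneg g0 g2) g2) g3),
    (mul_nonneg (mul_nonneg (mul_nonneg g1 g1) g1) g3),
    (mul_nonneg (mul_nonneg (mul_nonneg g1 g1) g2) g3),
    (mul_nonneg (mul_nonneg (mul_nonneg g1 g2) g3) g3),
    (mul_nonneg (mul_nonneg (mul_nonneg g1 g2) g5) g5),
    (mul_nonneg (mul_nonneg (mul_nonneg g2 g2) g2) g2),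
    (mul_nonneg (mul_nonneg (mul_nonneg g2 g2) g3) g3)]

lemma cert21u (a b c : ℝ) (ha : 0 ≤ a) (hab : a ≤ b) (hbc : b ≤ c) (hc : c ≤ 2/5) (hgap : c - b ≤ 379/1000) :
    Qp a b c ((1/2)*b + (2/5)*c + 4/25) < 0 := by
  have g0 : (0:ℝ) ≤ a := by linarith
  have g1 : (0:ℝ) ≤ -a + b := by linarith
  have g2 : (0:ℝ) ≤ -b + c := by linarith
  have g3 : (0:ℝ) ≤ -c + 2/5 := by linarith
  have g4 : (0:ℝ) ≤ b - c + 379/1000 := by linarith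
  unfold Qp
  linarith [g1,
    (mul_nonneg g0 g1),
    (mul_nonneg g0 g3),
    (mul_nonneg g1 g1),
    (mul_nonneg g1 g3),
    (mul_nonneg g2 g4),
    (mul_nonneg g3 g4),
    (mul_nonneg (mul_nonneg g0 g0) g1),
    (mul_nonneg (mul_nonneg g0 g1) g2),
    (mul_nonneg (mul_nonneg g0 g1) g3),
    (mul_nonneg (mul_nonneg g0 g2) g3),
    (mul_nonneg (mul_nonneg g0 g3) g3),
    (mul_nonneg (mul_nonneg g0 g4) g4),
    (mul_nonneg (mul_nonneg g1 g1) g2),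
    (mul_nonneg (mul_nonneg g1 g1) g3),
    (mul_nonneg (mul_nonneg g1 g2) g3),
    (mul_nonneg (mul_nonneg g2 g2) g4),
    (mul_nonneg (mul_nonneg g2 g3) g4),
    (mul_nonneg (mul_nonneg (mul_nonneg g0 g0) g0) g1),
    (mul_nonneg (mul_nonneg (mul_nonneg g0 g0) g0) g2),
    (mul_nonneg (mul_nonneg (mul_nonneg g0 g0) g0) g3),
    (mul_nonneg (mul_nonneg (mul_nonneg g0 g0) g1) g1),
    (mul_nonneg (mul_nonneg (mul_nonneg g0 g0) g1) g2),
    (mul_nonneg (mul_nonneg (mul_nonneg g0 g0) g2) g3),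
    (mul_nonneg (mul_nonneg (mul_nonneg g0 g1) g1) g1),
    (mul_nonneg (mul_nonneg (mul_nonneg g0 g1) g1) g2),
    (mul_nonneg (mul_nonneg (mul_nonneg g0 g1) g2) g2),
    (mul_nonneg (mul_nonneg (mul_nonneg g0 g2) g2) g2),
    (mul_nonneg (mul_nonneg (mul_nonneg g0 g2) g3) g3),
    (mul_nonneg (mul_nonneg (mul_nonneg g1 g1) g1) g1),
    (mul_nonneg (mul_nonneg (mul_nonneg g1 g1) g1) g2),
    (mul_nonneg (mul_nonneg (mul_nonneg g1 g1) g2) g2),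
    (mul_nonneg (mul_nonneg (mul_nonneg g1 g2) g2) g2),
    (mul_nonneg (mul_nonneg (mul_nonneg g2 g2) g3) g4)]

lemma cert21v (a b c : ℝ) (ha : 0 ≤ a) (hab : a ≤ b) (hbc : b ≤ c) (hc : c ≤ 2/5) (hgap : c - b ≤ 379/1000) :
    Qp a b c ((2/5)*c + 33/50) < 0 := by
  have g0 : (0:ℝ) ≤ a := by linarith
  have g1 : (0:ℝ) ≤ -a + b := by linarith
  have g2 : (0:ℝ) ≤ -b + c := by linarith
  have g3 : (0:ℝ) ≤ -c + 2/5 := by linarith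
  have g4 : (0:ℝ) ≤ b - c + 379/1000 := by linarith
  unfold Qp
  linarith [g3,
    g4,
    (mul_nonneg g0 g2),
    (mul_nonneg g1 g3),
    (mul_nonneg g1 g4),
    (mul_nonneg g2 g3),
    (mul_nonneg g2 g4),
    (mul_nonneg g3 g3),
    (mul_nonneg (mul_nonneg g0 g0) g3),
    (mul_nonneg (mul_nonneg g0 g1) g3),
    (mul_nonneg (mul_nonneg g0 g3) g3),
    (mul_nonneg (mul_nonneg g1 g2) g3),
    (mul_nonneg (mul_nonneg g1 g3) g3),
    (mul_nonneg (mul_nonneg g2 g3) g3),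
    (mul_nonneg (mul_nonneg (mul_nonneg g0 g0) g1) g3),
    (mul_nonneg (mul_nonneg (mul_nonneg g0 g0) g2) g3),
    (mul_nonneg (mul_nonneg (mul_nonneg g0 g1) g1) g3),
    (mul_nonneg (mul_nonneg (mul_nonneg g0 g1) g2) g3),
    (mul_nonneg (mul_nonneg (mul_nonneg g0 g2) g2) g3),
    (mul_nonneg (mul_nonneg (mul_nonneg g1 g1) g1) g3),
    (mul_nonneg (mul_nonneg (mul_nonneg g1 g1) g2) g3),
    (mul_nonneg (mul_nonneg (mul_nonneg g1 g2) g3) g3),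
    (mul_nonneg (mul_nonneg (mul_nonneg g2 g2) g3) g3)]

lemma cert22u (a b c : ℝ) (ha : 0 ≤ a) (hab : a ≤ b) (hbc : b ≤ c) (hc : 2/5 ≤ c) (hc' : c ≤ 1/2) (hgap : c - b ≤ 379/1000) :
    Qp a b c ((49/100)*b + (7/20)*c + 17/100) < 0 := by
  have g0 : (0:ℝ) ≤ a := by linarith
  have g1 : (0:ℝ) ≤ -a + b := by linarith
  have g2 : (0:ℝ) ≤ -b + c := by linarith
  have g3 : (0:ℝ) ≤ -c + 1/2 := by linarith
  have g4 : (0:ℝ) ≤ c - 2/5 := by linarith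
  have g5 : (0:ℝ) ≤ b - c + 379/1000 := by linarith
  unfold Qp
  linarith [g1,
    g3,
    (mul_nonneg g0 g1),
    (mul_nonneg g0 g3),
    (mul_nonneg g1 g3),
    (mul_nonneg g1 g5),
    (mul_nonneg g2 g5),
    (mul_nonneg g3 g3),
    (mul_nonneg (mul_nonneg g0 g0) g1),
    (mul_nonneg (mul_nonneg g0 g1) g2),
    (mul_nonneg (mul_nonneg g0 g1) g3),
    (mul_nonneg (mul_nonneg g0 g2) g3),
    (mul_nonneg (mul_nonneg g0 g3) g3),
    (mul_nonneg (mul_nonneg g1 g1) g3),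
    (mul_nonneg (mul_nonneg g1 g2) g3),
    (mul_nonneg (mul_nonneg g1 g2) g5),
    (mul_nonneg (mul_nonneg g2 g2) g5),
    (mul_nonneg (mul_nonneg g2 g3) g3),
    (mul_nonneg (mul_nonneg (mul_nonneg g0 g0) g0) g1),
    (mul_nonneg (mul_nonneg (mul_nonneg g0 g0) g0) g3),
    (mul_nonneg (mul_nonneg (mul_nonneg g0 g0) g0) g5),
    (mul_nonneg (mul_nonneg (mul_nonneg g0 g0) g1) g1),
    (mul_nonneg (mul_nonneg (mul_nonneg g0 g0) g1) g2),
    (mul_nonneg (mul_nonneg (mul_nonneg g0 g0) g2) g3),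
    (mul_nonneg (mul_nonneg (mul_nonneg g0 g0) g2) g5),
    (mul_nonneg (mul_nonneg (mul_nonneg g0 g1) g1) g1),
    (mul_nonneg (mul_nonneg (mul_nonneg g0 g1) g1) g2),
    (mul_nonneg (mul_nonneg (mul_nonneg g0 g1) g2) g2),
    (mul_nonneg (mul_nonneg (mul_nonneg g0 g2) g3) g3),
    (mul_nonneg (mul_nonneg (mul_nonneg g1 g1) g1) g1),
    (mul_nonneg (mul_nonneg (mul_nonneg g1 g1) g1) g2),
    (mul_nonneg (mul_nonneg (mul_nonneg g1 g1) g2) g2),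
    (mul_nonneg (mul_nonneg (mul_nonneg g1 g2) g2) g2),
    (mul_nonneg (mul_nonneg (mul_nonneg g2 g2) g3) g3)]

lemma cert22v (a b c : ℝ) (ha : 0 ≤ a) (hab : a ≤ b) (hbc : b ≤ c) (hc : 2/5 ≤ c) (hc' : c ≤ 1/2) (hgap : c - b ≤ 379/1000) :
    Qp a b c ((-1/100)*b + (7/20)*c + 67/100) < 0 := by
  have g0 : (0:ℝ) ≤ a := by linarith
  have g1 : (0:ℝ) ≤ -a + b := by linarith
  have g2 : (0:ℝ) ≤ -b + c := by linarith
  have g3 : (0:ℝ) ≤ -c + 1/2 := by linarith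
  have g4 : (0:ℝ) ≤ c - 2/5 := by linarith
  have g5 : (0:ℝ) ≤ b - c + 379/1000 := by linarith
  unfold Qp
  linarith [g0,
    g3,
    (mul_nonneg g0 g1),
    (mul_nonneg g0 g2),
    (mul_nonneg g1 g3),
    (mul_nonneg g1 g5),
    (mul_nonneg g2 g3),
    (mul_nonneg g2 g5),
    (mul_nonneg g3 g3),
    (mul_nonneg (mul_nonneg g0 g0) g1),
    (mul_nonneg (mul_nonneg g0 g0) g2),
    (mul_nonneg (mul_nonneg g0 g0) g3),
    (mul_nonneg (mul_nonneg g0 g1) g1),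
    (mul_nonneg (mul_nonneg g0 g1) g3),
    (mul_nonneg (mul_nonneg g0 g2) g3),
    (mul_nonneg (mul_nonneg g1 g1) g5),
    (mul_nonneg (mul_nonneg g1 g2) g3),
    (mul_nonneg (mul_nonneg g1 g3) g3),
    (mul_nonneg (mul_nonneg g2 g3) g3),
    (mul_nonneg (mul_nonneg (mul_nonneg g0 g0) g0) g0),
    (mul_nonneg (mul_nonneg (mul_nonneg g0 g0) g0) g1),
    (mul_nonneg (mul_nonneg (mul_nonneg g0 g0) g0) g2),
    (mul_nonneg (mul_nonneg (mul_nonneg g0 g0) g1) g2),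
    (mul_nonneg (mul_nonneg (mul_nonneg g0 g0) g1) g3),
    (mul_nonneg (mul_nonneg (mul_nonneg g0 g0) g2) g3),
    (mul_nonneg (mul_nonneg (mul_nonneg g0 g1) g1) g2),
    (mul_nonneg (mul_nonneg (mul_nonneg g0 g1) g1) g3),
    (mul_nonneg (mul_nonneg (mul_nonneg g0 g1) g2) g3),
    (mul_nonneg (mul_nonneg (mul_nonneg g0 g2) g2) g3),
    (mul_nonneg (mul_nonneg (mul_nonneg g1 g1) g1) g3),
    (mul_nonneg (mul_nonneg (mul_nonneg g1 g1) g2) g3),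
    (mul_nonneg (mul_nonneg (mul_nonneg g1 g1) g2) g5),
    (mul_nonneg (mul_nonneg (mul_nonneg g1 g2) g2) g3),
    (mul_nonneg (mul_nonneg (mul_nonneg g2 g2) g3) g3)]

set_option maxHeartbeats 1000000 in
theorem F_family_xi4_sub_xi3_gt
    (a b c : ℝ) (ha : 0 ≤ a) (hab : a ≤ b) (hbc : b ≤ c) (hc1 : c ≤ 1)
    (ξ₁ ξ₂ ξ₃ ξ₄ : ℝ) (hξ12 : ξ₁ ≤ ξ₂) (hξ23 : ξ₂ ≤ ξ₃) (hξ34 : ξ₃ ≤ ξ₄)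
    (hder : ∀ x : ℝ,
      deriv (fun t : ℝ => t * (t - a) * (t - b) * (t - c) * (t - 1)) x
        = 5 * (x - ξ₁) * (x - ξ₂) * (x - ξ₃) * (x - ξ₄))
    (z₁ z₂ z₃ z₄ : ℝ)
    (hz₁ : z₁ = a / 2) (hz₂ : z₂ = (a + b) / 2)
    (hz₃ : z₃ = (b + c) / 2) (hz₄ : z₄ = (c + 1) / 2) :
    (c ≤ 0.6 ∧ c - b ≤ 0.25 → ξ₄ - ξ₃ > z₄ - z₃) ∧
      (c ≤ 0.5 ∧ c - b ≤ 0.379 → ξ₄ - ξ₃ > z₄ - z₃) := by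
  have hQf : ∀ x : ℝ, deriv (fun t : ℝ => t * (t - a) * (t - b) * (t - c) * (t - 1)) x
      = Qp a b c x := by
    intro x
    have h : HasDerivAt (fun t : ℝ => t * (t - a) * (t - b) * (t - c) * (t - 1))
        (Qp a b c x) x := by
      have h1 := ((((hasDerivAt_id x).mul ((hasDerivAt_id x).sub_const a)).mul
          ((hasDerivAt_id x).sub_const b)).mul ((hasDerivAt_id x).sub_const c)).mul
          ((hasDerivAt_id x).sub_const 1)
      refine h1.congr_deriv ?_
      simp only [id_eq, Pi.mul_apply, id, Qp]
      ring
    exact h.deriv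
  have hq : ∀ x : ℝ, Qp a b c x = 5 * (x - ξ₁) * (x - ξ₂) * (x - ξ₃) * (x - ξ₄) := by
    intro x
    rw [← hQf x]
    exact hder x
  -- ξ₁ is nonnegative
  have hξ1 : 0 ≤ ξ₁ := by
    by_contra hcon
    push_neg at hcon
    have h0 : Qp a b c ξ₁ = 0 := by rw [hq ξ₁]; ring
    have hE1 : (0:ℝ) < 1 + a + b + c := by linarith
    have hE2 : (0:ℝ) ≤ a + b + c + a*b + a*c + b*c := by
      have := mul_nonneg ha (ha.trans hab)
      have := mul_nonneg ha ((ha.trans hab).trans hbc)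
      have := mul_nonneg (ha.trans hab) ((ha.trans hab).trans hbc)
      linarith
    have hE3 : (0:ℝ) ≤ a*b + a*c + b*c + a*b*c := by
      have h1 := mul_nonneg ha (ha.trans hab)
      have h2 := mul_nonneg ha ((ha.trans hab).trans hbc)
      have h3 := mul_nonneg (ha.trans hab) ((ha.trans hab).trans hbc)
      have h4 := mul_nonneg h1 ((ha.trans hab).trans hbc)
      linarith
    have hE4 : (0:ℝ) ≤ a*b*c :=
      mul_nonneg (mul_nonneg ha (ha.trans hab)) ((ha.trans hab).trans hbc)
    have hp3 : (0:ℝ) < (-ξ₁)^3 := pow_pos (by linarith) 3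
    have hp4 : (0:ℝ) < (-ξ₁)^4 := pow_pos (by linarith) 4
    have t1 := mul_pos hE1 hp3
    have t2 := mul_nonneg hE2 (sq_nonneg ξ₁)
    have t3 := mul_nonneg hE3 (neg_nonneg.2 hcon.le)
    unfold Qp at h0
    nlinarith [t1, t2, t3, hE4, hp4]
  -- ξ₂ ≤ b
  have hξ2b : ξ₂ ≤ b := by
    by_contra hcon
    push_neg at hcon
    rcases lt_or_ge ξ₁ b with h1 | h1
    · have e1 : Qp a b c b = 5 * (b - ξ₁) * (b - ξ₂) * (b - ξ₃) * (b - ξ₄) := hq b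
      have e2 : Qp a b c b = b * (b - a) * (b - c) * (b - 1) := by unfold Qp; ring
      have p1 : (0:ℝ) < (b - ξ₁) * (ξ₂ - b) := mul_pos (by linarith) (by linarith)
      have p2 : (0:ℝ) < (ξ₃ - b) * (ξ₄ - b) := mul_pos (by linarith) (by linarith)
      have p3 : (0:ℝ) ≤ (b * (b - a)) * ((c - b) * (1 - b)) :=
        mul_nonneg (mul_nonneg (ha.trans hab) (by linarith))
          (mul_nonneg (by linarith) (by linarith))
      nlinarith [mul_pos p1 p2]
    · rcases eq_or_lt_of_le (ha.trans hab) with hb0 | hb0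
      · -- b = 0, hence a = 0
        have hb0' : b = 0 := hb0.symm
        have ha0 : a = 0 := le_antisymm (hb0' ▸ hab) ha
        have e3 : 5 * (ξ₁*ξ₂*ξ₃ + ξ₁*ξ₂*ξ₄ + ξ₁*ξ₃*ξ₄ + ξ₂*ξ₃*ξ₄)
            = 2 * (a*b + a*c + b*c + a*b*c) := by
          have q1 := hq 1
          have qm1 := hq (-1)
          have q2 := hq 2
          have qm2 := hq (-2)
          unfold Qp at q1 qm1 q2 qm2
          linear_combination (2/3) * q1 - (2/3) * qm1 - (1/12) * q2 + (1/12) * qm2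
        rw [ha0, hb0'] at e3
        have h2 : (0:ℝ) < ξ₂ := by rw [hb0'] at hcon; exact hcon
        have h3 : (0:ℝ) < ξ₃ := lt_of_lt_of_le h2 hξ23
        have h4 : (0:ℝ) < ξ₄ := lt_of_lt_of_le h3 hξ34
        have m1 := mul_pos (mul_pos h2 h3) h4
        have m2 := mul_nonneg hξ1 (mul_pos h2 h3).le
        have m3 := mul_nonneg hξ1 (mul_pos h2 h4).le
        have m4 := mul_nonneg hξ1 (mul_pos h3 h4).le
        nlinarith [m1, m2, m3, m4]
      · -- 0 < b and b ≤ ξ₁ : contradiction by strict monotonicity on [0, b]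
        have hmono : StrictMonoOn (fun t : ℝ => t * (t - a) * (t - b) * (t - c) * (t - 1))
            (Set.Icc 0 b) := by
          apply strictMonoOn_of_deriv_pos (convex_Icc 0 b)
          · exact (((((continuous_id.mul (continuous_id.sub continuous_const)).mul
              (continuous_id.sub continuous_const)).mul
              (continuous_id.sub continuous_const)).mul
              (continuous_id.sub continuous_const))).continuousOn
          · intro x hx
            rw [interior_Icc] at hx
            rw [hQf x]
            have p1 : (0:ℝ) < (ξ₁ - x) * (ξ₂ - x) :=
              mul_pos (by linarith [hx.2]) (by linarith [hx.2])
            have p2 : (0:ℝ) < (ξ₃ - x) * (ξ₄ - x) :=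
              mul_pos (by linarith [hx.2]) (by linarith [hx.2])
            nlinarith [hq x, mul_pos p1 p2]
        have hlt := hmono (Set.left_mem_Icc.2 (ha.trans hab)) (Set.right_mem_Icc.2 (ha.trans hab)) hb0
        simp only at hlt
        have hfb : b * (b - a) * (b - b) * (b - c) * (b - 1) = 0 := by ring
        nlinarith [hlt]
  -- the key step
  have hb1 : b ≤ 1 := hbc.trans hc1
  have key : ∀ u : ℝ, b ≤ u → Qp a b c u < 0 → Qp a b c (u + (1 - b)/2) < 0 →
      ξ₄ - ξ₃ > (1 - b)/2 := by
    intro u hbu hu hv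
    have h3 : ξ₃ < u := by
      by_contra hcc
      push_neg at hcc
      have a1 : (0:ℝ) ≤ u - ξ₁ := by linarith
      have a2 : (0:ℝ) ≤ u - ξ₂ := by linarith
      have a3 : (0:ℝ) ≤ ξ₃ - u := by linarith
      have a4 : (0:ℝ) ≤ ξ₄ - u := by linarith
      nlinarith [hq u, mul_nonneg (mul_nonneg a1 a2) (mul_nonneg a3 a4)]
    have h4 : u + (1 - b)/2 < ξ₄ := by
      by_contra hcc
      push_neg at hcc
      have a1 : (0:ℝ) ≤ u + (1 - b)/2 - ξ₁ := by linarith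
      have a2 : (0:ℝ) ≤ u + (1 - b)/2 - ξ₂ := by linarith
      have a3 : (0:ℝ) ≤ u + (1 - b)/2 - ξ₃ := by linarith
      have a4 : (0:ℝ) ≤ u + (1 - b)/2 - ξ₄ := by linarith
      nlinarith [hq (u + (1 - b)/2), mul_nonneg (mul_nonneg a1 a2) (mul_nonneg a3 a4)]
    linarith
  have hzz : z₄ - z₃ = (1 - b)/2 := by rw [hz₃, hz₄]; ring
  constructor
  · rintro ⟨hc6, hgap⟩
    norm_num at hc6 hgap
    rw [hzz]
    rcases le_or_gt c (1/2) with hsub | hsub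
    · apply key ((11/20)*b + (7/20)*c + 3/20) (by linarith)
        (cert11u a b c ha hab hbc hsub (by linarith))
      have e : (11/20)*b + (7/20)*c + 3/20 + (1 - b)/2 = (1/20)*b + (7/20)*c + 13/20 := by ring
      rw [e]
      exact cert11v a b c ha hab hbc hsub (by linarith)
    · apply key ((27/50)*b + (21/50)*c + 1/10) (by linarith)
        (cert12u a b c ha hab hbc hsub.le hc6 (by linarith))
      have e : (27/50)*b + (21/50)*c + 1/10 + (1 - b)/2 = (1/25)*b + (21/50)*c + 3/5 := by ring
      rw [e]
      exact cert12v a b c ha hab hbc hsub.le hc6 (by linarith)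
  · rintro ⟨hc5, hgap⟩
    norm_num at hc5 hgap
    rw [hzz]
    rcases le_or_gt c (2/5) with hsub | hsub
    · apply key ((1/2)*b + (2/5)*c + 4/25) (by linarith)
        (cert21u a b c ha hab hbc hsub (by linarith))
      have e : (1/2)*b + (2/5)*c + 4/25 + (1 - b)/2 = (2/5)*c + 33/50 := by ring
      rw [e]
      exact cert21v a b c ha hab hbc hsub (by linarith)
    · apply key ((49/100)*b + (7/20)*c + 17/100) (by linarith)
        (cert22u a b c ha hab hbc hsub.le hc5 (by linarith))
      have e : (49/100)*b + (7/20)*c + 17/100 + (1 - b)/2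
          = (-1/100)*b + (7/20)*c + 67/100 := by ring
      rw [e]
      exact cert22v a b c ha hab hbc hsub.le hc5 (by linarith)
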